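/- Let n ≥ 1, m ≥ 2, let x, y ∈ ℝⁿ with x ≠ y, let z = (x + y)/2 and a = ‖x − z‖, and let δ > 0. Then there exist a 1-Lipschitz map u : {x, y} → ℝᵐ and a 1-Lipschitz map v : ℝⁿ → ℝᵐ with ‖u(p) − v(p)‖ = δ for p ∈ {x, y}, such that every 1-Lipschitz map ũ : {x, y, z} → ℝᵐ with ũ(x) = u(x) and ũ(y) = u(y) satisfies ‖v(z) − ũ(z)‖ = √(δ² + 2δa). -/

import Mathlib

open RealInnerProductSpace

lemma orth_norm_sq {F : Type*} [NormedAddCommGroup F] [InnerProductSpace ℝ F]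
    {e f : F} (he : ‖e‖ = 1) (hf : ‖f‖ = 1) (hef : ⟪e, f⟫ = 0) (s t : ℝ) :
    ‖s • e + t • f‖ ^ 2 = s ^ 2 + t ^ 2 := by
  rw [norm_add_sq_real, norm_smul, norm_smul, real_inner_smul_left, real_inner_smul_right,
    hef, he, hf]
  simp [mul_pow, sq_abs]

lemma lip_aux {α β A B C : ℝ} (hαβ : α ^ 2 + β ^ 2 = 1) (hB : B ≤ A) (hA : A ≤ C) :
    α ^ 2 * A + β ^ 2 * B ≤ C := by
  have key : α ^ 2 * C + β ^ 2 * C = C := by rw [← add_mul, hαβ, one_mul]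
  have h1 := mul_le_mul_of_nonneg_left hA (sq_nonneg α)
  have h2 := mul_le_mul_of_nonneg_left (hB.trans hA) (sq_nonneg β)
  linarith

lemma mid_force {F : Type*} [NormedAddCommGroup F] [InnerProductSpace ℝ F]
    {P w : F} {a : ℝ} (hP : ‖P‖ = a) (h1 : ‖w - P‖ ≤ a) (h2 : ‖w + P‖ ≤ a) : w = 0 := by
  have e1 : ‖w - P‖ ^ 2 + ‖w + P‖ ^ 2 = 2 * ‖w‖ ^ 2 + 2 * ‖P‖ ^ 2 := by
    rw [norm_sub_sq_real, norm_add_sq_real]; ring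
  have h0 : ‖w‖ = 0 := by
    nlinarith [norm_nonneg w, norm_nonneg (w - P), norm_nonneg (w + P)]
  simpa using h0

set_option maxHeartbeats 1000000 in
theorem stmt_3 (n m : ℕ) (hn : 1 ≤ n) (hm : 2 ≤ m)
    (x y : EuclideanSpace ℝ (Fin n)) (hxy : x ≠ y)
    (z : EuclideanSpace ℝ (Fin n)) (hz : z = (1 / 2 : ℝ) • (x + y))
    (a : ℝ) (ha : a = ‖x - z‖)
    (δ : ℝ) (hδ : 0 < δ) :
    ∃ u v : EuclideanSpace ℝ (Fin n) → EuclideanSpace ℝ (Fin m),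
      ‖u x - u y‖ ≤ ‖x - y‖ ∧
      (∀ p q : EuclideanSpace ℝ (Fin n), ‖v p - v q‖ ≤ ‖p - q‖) ∧
      (∀ p ∈ ({x, y} : Set (EuclideanSpace ℝ (Fin n))), ‖u p - v p‖ = δ) ∧
      (∀ uext : EuclideanSpace ℝ (Fin n) → EuclideanSpace ℝ (Fin m),
        (∀ p ∈ ({x, y, z} : Set (EuclideanSpace ℝ (Fin n))),
          ∀ q ∈ ({x, y, z} : Set (EuclideanSpace ℝ (Fin n))),
            ‖uext p - uext q‖ ≤ ‖p - q‖) →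
        uext x = u x → uext y = u y →
        ‖v z - uext z‖ = Real.sqrt (δ ^ 2 + 2 * δ * a)) := by
  classical
  -- orthonormal pair in ℝᵐ
  obtain ⟨e, f, he, hf, hef⟩ :
      ∃ e f : EuclideanSpace ℝ (Fin m), ‖e‖ = 1 ∧ ‖f‖ = 1 ∧ ⟪e, f⟫ = 0 := by
    refine ⟨EuclideanSpace.single ⟨0, by omega⟩ 1, EuclideanSpace.single ⟨1, by omega⟩ 1,
      ?_, ?_, ?_⟩
    · simp [EuclideanSpace.norm_single]
    · simp [EuclideanSpace.norm_single]
    · rw [EuclideanSpace.inner_single_left]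
      simp [EuclideanSpace.single_apply]
  -- geometry in ℝⁿ
  have hxz : x - z = (1 / 2 : ℝ) • (x - y) := by rw [hz]; module
  have hyz : y - z = -(x - z) := by rw [hz]; module
  have hxy0 : x - y ≠ 0 := sub_ne_zero.mpr hxy
  have hxz0 : x - z ≠ 0 := by
    rw [hxz]; simp [hxy0]
  have hapos : 0 < a := by rw [ha]; exact norm_pos_iff.mpr hxz0
  have hnxy : ‖x - y‖ = 2 * a := by
    rw [ha, hxz, norm_smul]
    norm_num
    ring
  have hnzx : ‖z - x‖ = a := by rw [← norm_neg, neg_sub, ← ha]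
  have hnzy : ‖z - y‖ = a := by rw [← norm_neg, neg_sub, hyz, norm_neg, ← ha]
  -- scalars
  set h : ℝ := Real.sqrt (δ ^ 2 + 2 * δ * a) with hh
  have hhsq : h ^ 2 = δ ^ 2 + 2 * δ * a := Real.sq_sqrt (by positivity)
  have hhpos : 0 < h := Real.sqrt_pos.mpr (by positivity)
  have haδ : 0 < a + δ := by linarith
  set α : ℝ := a / (a + δ) with hα
  set β : ℝ := h / (a + δ) with hβ
  have hαβ : α ^ 2 + β ^ 2 = 1 := by
    rw [hα, hβ, div_pow, div_pow, ← add_div, div_eq_one_iff_eq (by positivity)]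
    nlinarith
  have hα0 : 0 ≤ α := by positivity
  have hβ0 : 0 ≤ β := by positivity
  -- the 1-Lipschitz functional t
  set t : EuclideanSpace ℝ (Fin n) → ℝ := fun p => ⟪a⁻¹ • (x - z), p - z⟫ with ht
  have htlip : ∀ p q, |t p - t q| ≤ ‖p - q‖ := by
    intro p q
    have hd : t p - t q = ⟪a⁻¹ • (x - z), p - q⟫ := by
      rw [ht]; simp only [← inner_sub_right]
      congr 1; abel
    rw [hd]
    calc |⟪a⁻¹ • (x - z), p - q⟫| ≤ ‖a⁻¹ • (x - z)‖ * ‖p - q‖ := abs_real_inner_le_norm _ _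
      _ = ‖p - q‖ := by
        rw [norm_smul, ← ha, Real.norm_eq_abs, abs_of_pos (inv_pos.mpr hapos),
          inv_mul_cancel₀ hapos.ne', one_mul]
  have htx : t x = a := by
    rw [ht]
    simp only [real_inner_smul_left, real_inner_self_eq_norm_sq, ← ha]
    field_simp
  have hty : t y = -a := by
    rw [ht]
    simp only [hyz, inner_neg_right, real_inner_smul_left, real_inner_self_eq_norm_sq, ← ha]
    field_simp
  have htz : t z = 0 := by rw [ht]; simp
  -- the maps
  set u : EuclideanSpace ℝ (Fin n) → EuclideanSpace ℝ (Fin m) :=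
    fun p => if p = x then a • e else (-a) • e with hu
  set v : EuclideanSpace ℝ (Fin n) → EuclideanSpace ℝ (Fin m) :=
    fun p => (α * t p) • e + (h - β * |t p|) • f with hv
  have hux : u x = a • e := by rw [hu]; simp
  have huy : u y = (-a) • e := by rw [hu]; simp [hxy.symm]
  refine ⟨u, v, ?_, ?_, ?_, ?_⟩
  · -- ‖u x - u y‖ ≤ ‖x - y‖
    rw [hux, huy, hnxy, ← sub_smul, norm_smul, he, mul_one, sub_neg_eq_add,
      Real.norm_eq_abs, abs_of_pos (by linarith : (0:ℝ) < a + a)]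
    linarith
  · -- v is 1-Lipschitz
    intro p q
    have hdiff : v p - v q
        = (α * t p - α * t q) • e + ((h - β * |t p|) - (h - β * |t q|)) • f := by
      rw [hv]; simp only [sub_smul]; abel
    have hsq : ‖v p - v q‖ ^ 2 ≤ ‖p - q‖ ^ 2 := by
      rw [hdiff, orth_norm_sq he hf hef]
      have h1 : |t p - t q| ≤ ‖p - q‖ := htlip p q
      have h2 : |(|t p| - |t q|)| ≤ |t p - t q| := abs_abs_sub_abs_le_abs_sub _ _
      have e3 : (|t p| - |t q|) ^ 2 ≤ (t p - t q) ^ 2 := by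
        rw [← sq_abs (|t p| - |t q|), ← sq_abs (t p - t q)]
        exact pow_le_pow_left₀ (abs_nonneg _) h2 2
      have e4 : (t p - t q) ^ 2 ≤ ‖p - q‖ ^ 2 := by
        rw [← sq_abs (t p - t q)]
        exact pow_le_pow_left₀ (abs_nonneg _) h1 2
      have e1 : (α * t p - α * t q) ^ 2 = α ^ 2 * (t p - t q) ^ 2 := by ring
      have e2 : ((h - β * |t p|) - (h - β * |t q|)) ^ 2 = β ^ 2 * (|t p| - |t q|) ^ 2 := by
        ring
      rw [e1, e2]
      exact lip_aux hαβ e3 e4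
    have h5 := Real.sqrt_le_sqrt hsq
    rwa [Real.sqrt_sq (norm_nonneg _), Real.sqrt_sq (norm_nonneg _)] at h5
  · -- ‖u p - v p‖ = δ at x and y
    intro p hp
    rcases hp with hp | hp
    · subst hp
      have hd : u p - v p = (a - α * a) • e + (-(h - β * a)) • f := by
        rw [hux, hv]
        simp only [htx, abs_of_pos hapos, neg_smul, sub_smul]
        abel
      have hsq : ‖u p - v p‖ ^ 2 = δ ^ 2 := by
        rw [hd, orth_norm_sq he hf hef]
        have e1 : a - α * a = a * δ / (a + δ) := by rw [hα]; field_simp; ring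
        have e2 : -(h - β * a) = -(h * δ / (a + δ)) := by rw [hβ]; field_simp; ring
        rw [e1, e2]
        field_simp
        nlinarith
      nlinarith [norm_nonneg (u p - v p)]
    · rw [Set.mem_singleton_iff] at hp
      subst hp
      have hd : u p - v p = (-(a - α * a)) • e + (-(h - β * a)) • f := by
        rw [huy, hv]
        simp only [hty, abs_neg, abs_of_pos hapos, neg_smul, sub_smul]
        push_cast
        module
      have hsq : ‖u p - v p‖ ^ 2 = δ ^ 2 := by
        rw [hd, orth_norm_sq he hf hef]
        have e1 : -(a - α * a) = -(a * δ / (a + δ)) := by rw [hα]; field_simp; ring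
        have e2 : -(h - β * a) = -(h * δ / (a + δ)) := by rw [hβ]; field_simp; ring
        rw [e1, e2]
        field_simp
        nlinarith
      nlinarith [norm_nonneg (u p - v p)]
  · -- forcing
    intro uext hL hx' hy'
    have hmemx : x ∈ ({x, y, z} : Set (EuclideanSpace ℝ (Fin n))) := by simp
    have hmemy : y ∈ ({x, y, z} : Set (EuclideanSpace ℝ (Fin n))) := by simp
    have hmemz : z ∈ ({x, y, z} : Set (EuclideanSpace ℝ (Fin n))) := by simp
    have h1 := hL z hmemz x hmemx
    rw [hnzx, hx', hux] at h1
    have h2 := hL z hmemz y hmemy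
    rw [hnzy, hy', huy, neg_smul, sub_neg_eq_add] at h2
    have hP : ‖a • e‖ = a := by
      rw [norm_smul, he, mul_one, Real.norm_eq_abs, abs_of_pos hapos]
    have hz0 : uext z = 0 := mid_force hP h1 h2
    have hvz : v z = h • f := by
      rw [hv]; simp [htz]
    rw [hz0, hvz, sub_zero, norm_smul, hf, mul_one, Real.norm_eq_abs, abs_of_pos hhpos]
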